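/- lim_{M→∞} (1/M) Σ_{i=1}^M (1 − 2i/(M(M+1)))^M = (1 − e^{−2})/2. Consequently, in the linear fitness random map model φ(i) = i, the asymptotic fraction of followers is (1 − e^{−2})/2 and the asymptotic fraction of experts is (1 + e^{−2})/2. -/

import Mathlib

open Filter Real Finset Topology

private lemma term_upper (M i : ℕ) (hM : 1 ≤ M) (hi1 : 1 ≤ i) (hiM : i ≤ M) :
    (1 - 2 * (i : ℝ) / ((M : ℝ) * ((M : ℝ) + 1))) ^ M
      ≤ Real.exp (-2 / ((M : ℝ) + 1)) ^ i := by
  have hM0 : (1 : ℝ) ≤ M := by exact_mod_cast hM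
  have hM1 : (0 : ℝ) < (M : ℝ) + 1 := by linarith
  have hMp : (0 : ℝ) < M := by linarith
  have hi0 : (0 : ℝ) < i := by exact_mod_cast hi1
  have hiM' : (i : ℝ) ≤ M := by exact_mod_cast hiM
  set x : ℝ := 2 * (i : ℝ) / ((M : ℝ) * ((M : ℝ) + 1)) with hxdef
  have hx0 : 0 < x := by positivity
  have hx1 : x ≤ 2 / ((M : ℝ) + 1) := by
    rw [hxdef, div_le_div_iff₀ (by positivity) hM1]
    nlinarith
  have h0 : (0 : ℝ) ≤ 1 - x := by
    have : 2 / ((M : ℝ) + 1) ≤ 1 := by rw [div_le_one hM1]; linarith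
    linarith
  have h1 : 1 - x ≤ Real.exp (-x) := by
    have := Real.add_one_le_exp (-x); linarith
  calc (1 - x) ^ M ≤ Real.exp (-x) ^ M := pow_le_pow_left₀ h0 h1 M
    _ = Real.exp ((M : ℝ) * (-x)) := by rw [← Real.exp_nat_mul]
    _ = Real.exp ((i : ℝ) * (-2 / ((M : ℝ) + 1))) := by
        congr 1; rw [hxdef]; field_simp
    _ = Real.exp (-2 / ((M : ℝ) + 1)) ^ i := by rw [← Real.exp_nat_mul]

private lemma term_lower (M i : ℕ) (hM : 3 ≤ M) (hi1 : 1 ≤ i) (hiM : i ≤ M) :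
    Real.exp (-8 / (M : ℝ)) * Real.exp (-2 / ((M : ℝ) + 1)) ^ i
      ≤ (1 - 2 * (i : ℝ) / ((M : ℝ) * ((M : ℝ) + 1))) ^ M := by
  have hM0 : (3 : ℝ) ≤ M := by exact_mod_cast hM
  have hM1 : (0 : ℝ) < (M : ℝ) + 1 := by linarith
  have hMp : (0 : ℝ) < M := by linarith
  have hi0 : (0 : ℝ) < i := by exact_mod_cast hi1
  have hiM' : (i : ℝ) ≤ M := by exact_mod_cast hiM
  set x : ℝ := 2 * (i : ℝ) / ((M : ℝ) * ((M : ℝ) + 1)) with hxdef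
  have hx0 : 0 < x := by positivity
  have hx1 : x ≤ 2 / ((M : ℝ) + 1) := by
    rw [hxdef, div_le_div_iff₀ (by positivity) hM1]
    nlinarith
  have hxhalf : x ≤ 1 / 2 := by
    have : 2 / ((M : ℝ) + 1) ≤ 1 / 2 := by
      rw [div_le_div_iff₀ hM1 (by norm_num : (0:ℝ) < 2)]; linarith
    linarith
  have h1x : (0 : ℝ) < 1 - x := by linarith
  have hA : Real.exp (-(x / (1 - x))) ≤ 1 - x := by
    have h2 : 1 / (1 - x) ≤ Real.exp (x / (1 - x)) := by
      have := Real.add_one_le_exp (x / (1 - x))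
      have he : 1 / (1 - x) = x / (1 - x) + 1 := by field_simp; ring
      linarith
    rw [Real.exp_neg]
    calc (Real.exp (x / (1 - x)))⁻¹ ≤ (1 / (1 - x))⁻¹ :=
          inv_anti₀ (by positivity) h2
      _ = 1 - x := by field_simp
  have hx_eq : (M : ℝ) * x = 2 * (i : ℝ) / ((M : ℝ) + 1) := by
    rw [hxdef]; field_simp
  have h2x : 2 * (M : ℝ) * x ^ 2 ≤ 8 / (M : ℝ) := by
    have h1 : x ^ 2 ≤ (2 / ((M : ℝ) + 1)) ^ 2 := pow_le_pow_left₀ hx0.le hx1 2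
    have key : 2 * (M : ℝ) * (2 / ((M : ℝ) + 1)) ^ 2 ≤ 8 / (M : ℝ) := by
      rw [div_pow, ← mul_div_assoc, div_le_div_iff₀ (by positivity) hMp]
      nlinarith
    nlinarith [mul_le_mul_of_nonneg_left h1 (by positivity : (0:ℝ) ≤ 2 * (M : ℝ))]
  have hB : (M : ℝ) * (x / (1 - x)) ≤ 2 * (i : ℝ) / ((M : ℝ) + 1) + 8 / (M : ℝ) := by
    have hstep1 : x / (1 - x) ≤ x * (1 + 2 * x) := by
      rw [div_le_iff₀ h1x]
      nlinarith [mul_nonneg (mul_nonneg hx0.le hx0.le) (by linarith : (0:ℝ) ≤ 1 - 2 * x)]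
    have expand : (M : ℝ) * (x * (1 + 2 * x)) = (M : ℝ) * x + 2 * (M : ℝ) * x ^ 2 := by ring
    have := mul_le_mul_of_nonneg_left hstep1 hMp.le
    linarith
  calc Real.exp (-8 / (M : ℝ)) * Real.exp (-2 / ((M : ℝ) + 1)) ^ i
      = Real.exp (-(2 * (i : ℝ) / ((M : ℝ) + 1) + 8 / (M : ℝ))) := by
        rw [← Real.exp_nat_mul, ← Real.exp_add]; congr 1; field_simp; ring
    _ ≤ Real.exp ((M : ℝ) * (-(x / (1 - x)))) := by
        apply Real.exp_le_exp.2; nlinarith [hB]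
    _ = Real.exp (-(x / (1 - x))) ^ M := by rw [← Real.exp_nat_mul]
    _ ≤ (1 - x) ^ M := pow_le_pow_left₀ (Real.exp_pos _).le hA M

private lemma aux_exp_tendsto_one (c : ℝ) :
    Tendsto (fun M : ℕ => Real.exp (-c / ((M : ℝ) + 1))) atTop (𝓝 1) := by
  have h0 : Tendsto (fun M : ℕ => -c / ((M : ℝ) + 1)) atTop (𝓝 0) := by
    have h1 := (tendsto_add_atTop_iff_nat (f := fun M : ℕ => -c / (M : ℝ)) 1).2
      (tendsto_const_div_atTop_nhds_zero_nat (-c))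
    exact h1.congr fun M => by push_cast; ring
  simpa [Function.comp_def] using (Real.continuous_exp.tendsto 0).comp h0

private lemma geom_limit :
    Tendsto (fun M : ℕ => (1 / (M : ℝ)) * ∑ i ∈ Finset.Icc 1 M,
        Real.exp (-2 / ((M : ℝ) + 1)) ^ i) atTop
      (𝓝 ((1 - Real.exp (-2)) / 2)) := by
  set r : ℕ → ℝ := fun M => Real.exp (-2 / ((M : ℝ) + 1)) with hrdef
  have hr1 : ∀ M : ℕ, r M < 1 := by
    intro M
    have : -2 / ((M : ℝ) + 1) < 0 := by
      apply div_neg_of_neg_of_pos (by norm_num); positivity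
    exact Real.exp_lt_one_iff.2 this
  -- denominator
  have hden : Tendsto (fun M : ℕ => (M : ℝ) * (1 - r M)) atTop (𝓝 2) := by
    have hlow : Tendsto (fun M : ℕ => 2 * ((M : ℝ) / ((M : ℝ) + 3))) atTop (𝓝 2) := by
      have := tendsto_natCast_div_add_atTop (𝕜 := ℝ) 3
      simpa using this.const_mul 2
    have hup : Tendsto (fun M : ℕ => 2 * ((M : ℝ) / ((M : ℝ) + 1))) atTop (𝓝 2) := by
      have := tendsto_natCast_div_add_atTop (𝕜 := ℝ) 1
      simpa using this.const_mul 2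
    refine tendsto_of_tendsto_of_tendsto_of_le_of_le hlow hup ?_ ?_
    · intro M
      have hM1 : (0 : ℝ) < (M : ℝ) + 1 := by positivity
      have hM3 : (0 : ℝ) < (M : ℝ) + 3 := by positivity
      set s : ℝ := 2 / ((M : ℝ) + 1) with hsdef
      have hs0 : 0 < s := by positivity
      have hrle : r M ≤ 1 / (1 + s) := by
        have h2 : 1 + s ≤ Real.exp s := by
          have := Real.add_one_le_exp s; linarith
        rw [hrdef]
        show Real.exp (-2 / ((M : ℝ) + 1)) ≤ 1 / (1 + s)
        rw [show (-2 : ℝ) / ((M : ℝ) + 1) = -s by rw [hsdef]; ring, Real.exp_neg, one_div]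
        exact inv_anti₀ (by linarith) h2
      have hs : 1 - 1 / (1 + s) = 2 / ((M : ℝ) + 3) := by
        rw [hsdef]; field_simp; ring
      have : 2 / ((M : ℝ) + 3) ≤ 1 - r M := by rw [← hs]; linarith
      calc 2 * ((M : ℝ) / ((M : ℝ) + 3)) = (M : ℝ) * (2 / ((M : ℝ) + 3)) := by ring
        _ ≤ (M : ℝ) * (1 - r M) := by
            apply mul_le_mul_of_nonneg_left this (Nat.cast_nonneg M)
    · intro M
      have hM1 : (0 : ℝ) < (M : ℝ) + 1 := by positivity
      have h1 : 1 - r M ≤ 2 / ((M : ℝ) + 1) := by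
        have h := Real.add_one_le_exp (-(2 / ((M : ℝ) + 1)))
        rw [hrdef]
        show 1 - Real.exp (-2 / ((M : ℝ) + 1)) ≤ 2 / ((M : ℝ) + 1)
        rw [neg_div]
        linarith
      calc (M : ℝ) * (1 - r M) ≤ (M : ℝ) * (2 / ((M : ℝ) + 1)) :=
            mul_le_mul_of_nonneg_left h1 (Nat.cast_nonneg M)
        _ = 2 * ((M : ℝ) / ((M : ℝ) + 1)) := by ring
  -- numerator
  have hnum : Tendsto (fun M : ℕ => r M - Real.exp (-2)) atTop (𝓝 (1 - Real.exp (-2))) :=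
    (aux_exp_tendsto_one 2).sub tendsto_const_nhds
  have hdiv : Tendsto (fun M : ℕ => (r M - Real.exp (-2)) / ((M : ℝ) * (1 - r M)))
      atTop (𝓝 ((1 - Real.exp (-2)) / 2)) := hnum.div hden (by norm_num)
  refine hdiv.congr' ?_
  filter_upwards [eventually_ge_atTop 1] with M hM
  have hMp : (0 : ℝ) < M := by exact_mod_cast hM
  have hM1 : (0 : ℝ) < (M : ℝ) + 1 := by positivity
  have hrM : r M ≠ 1 := (hr1 M).ne
  have hsum : ∑ i ∈ Finset.Icc 1 M, r M ^ i = (r M ^ (M + 1) - r M ^ 1) / (r M - 1) := by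
    rw [← Finset.Ico_add_one_right_eq_Icc]
    exact geom_sum_Ico hrM (by omega)
  have hpow : r M ^ (M + 1) = Real.exp (-2) := by
    rw [hrdef]
    show Real.exp (-2 / ((M : ℝ) + 1)) ^ (M + 1) = Real.exp (-2)
    rw [← Real.exp_nat_mul]
    congr 1
    push_cast
    field_simp
  have h1r : 1 - r M ≠ 0 := by have := hr1 M; intro h; linarith [sub_eq_zero.mp h]
  have hr1ne : r M - 1 ≠ 0 := sub_ne_zero.mpr hrM
  have hMne : (M : ℝ) ≠ 0 := hMp.ne'
  rw [hsum, hpow, pow_one, one_div, inv_mul_eq_div, div_div,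
    div_eq_div_iff (mul_ne_zero hMne h1r) (mul_ne_zero hr1ne hMne)]
  ring

private lemma aux_exp_tendsto_one' (c : ℝ) :
    Tendsto (fun M : ℕ => Real.exp (-c / (M : ℝ))) atTop (𝓝 1) := by
  simpa [Function.comp_def] using (Real.continuous_exp.tendsto 0).comp (tendsto_const_div_atTop_nhds_zero_nat (-c))

/-- Linear fitness model `φ(i) = i`: the asymptotic fraction of followers is
`(1 - e⁻²)/2`. -/
theorem stmt13 :
    Filter.Tendsto (fun M : ℕ =>
        (1 / (M : ℝ)) * ∑ i ∈ Finset.Icc 1 M,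
          (1 - 2 * (i : ℝ) / ((M : ℝ) * ((M : ℝ) + 1))) ^ M)
      Filter.atTop
      (nhds ((1 - Real.exp (-2)) / 2)) := by
  have key := geom_limit
  have hlow : Tendsto (fun M : ℕ => Real.exp (-8 / (M : ℝ)) *
      ((1 / (M : ℝ)) * ∑ i ∈ Finset.Icc 1 M, Real.exp (-2 / ((M : ℝ) + 1)) ^ i))
      atTop (𝓝 ((1 - Real.exp (-2)) / 2)) := by
    have := (aux_exp_tendsto_one' 8).mul key
    simpa using this
  refine tendsto_of_tendsto_of_tendsto_of_le_of_le' hlow key ?_ ?_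
  · filter_upwards [eventually_ge_atTop 3] with M hM
    have h0 : (0 : ℝ) ≤ 1 / (M : ℝ) := by positivity
    have hsum : ∑ i ∈ Finset.Icc 1 M, Real.exp (-8 / (M : ℝ)) * Real.exp (-2 / ((M : ℝ) + 1)) ^ i
        ≤ ∑ i ∈ Finset.Icc 1 M, (1 - 2 * (i : ℝ) / ((M : ℝ) * ((M : ℝ) + 1))) ^ M := by
      refine Finset.sum_le_sum fun i hi => ?_
      rw [Finset.mem_Icc] at hi
      exact term_lower M i hM hi.1 hi.2
    calc Real.exp (-8 / (M : ℝ)) *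
          ((1 / (M : ℝ)) * ∑ i ∈ Finset.Icc 1 M, Real.exp (-2 / ((M : ℝ) + 1)) ^ i)
        = (1 / (M : ℝ)) * ∑ i ∈ Finset.Icc 1 M,
            Real.exp (-8 / (M : ℝ)) * Real.exp (-2 / ((M : ℝ) + 1)) ^ i := by
          rw [← Finset.mul_sum]; ring
      _ ≤ _ := mul_le_mul_of_nonneg_left hsum h0
  · filter_upwards [eventually_ge_atTop 1] with M hM
    have h0 : (0 : ℝ) ≤ 1 / (M : ℝ) := by positivity
    refine mul_le_mul_of_nonneg_left ?_ h0
    refine Finset.sum_le_sum fun i hi => ?_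
    rw [Finset.mem_Icc] at hi
    exact term_upper M i hM hi.1 hi.2
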